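/- Define w_m = binom(n, m+1)·(m+1) / (∑_{k=0}^m binom(n,k)) for 0 ≤ m < n. Then the sequence (w_m) is nonincreasing in m, i.e., w_{m+1} ≤ w_m for all m with m+1 < n. -/

import Mathlib

lemma choose_id_q (n m : ℕ) :
    ((n.choose (m + 2) : ℚ)) * (m + 2) = ((n : ℚ) - (m + 1)) * n.choose (m + 1) := by
  rcases le_or_gt (m + 1) n with hle | hlt
  · have hnat := Nat.choose_succ_right_eq n (m + 1)
    have hc : ((n.choose (m + 2) : ℚ)) * (m + 2) = (n.choose (m + 1) : ℚ) * ((n : ℚ) - (m + 1)) := by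
      have hcast := congrArg (Nat.cast (R := ℚ)) hnat
      push_cast [Nat.cast_sub hle] at hcast
      linarith
    linarith
  · have h1 : n.choose (m + 1) = 0 := Nat.choose_eq_zero_of_lt hlt
    have h2 : n.choose (m + 2) = 0 := Nat.choose_eq_zero_of_lt (by omega)
    simp [h1, h2]

lemma key_ineq (n : ℕ) : ∀ m : ℕ,
    ((n : ℚ) - 2 * (m + 1)) * (∑ k ∈ Finset.range (m + 1), (n.choose k : ℚ)) ≤
      ((m : ℚ) + 1) * n.choose (m + 1) := by
  intro m
  induction m with
  | zero => simp
  | succ m ih =>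
      rw [Finset.sum_range_succ]
      have hS : (0 : ℚ) ≤ ∑ k ∈ Finset.range (m + 1), (n.choose k : ℚ) :=
        Finset.sum_nonneg fun i _ => by positivity
      have hC : (0 : ℚ) ≤ (n.choose (m + 1) : ℚ) := by positivity
      have hid := choose_id_q n m
      push_cast
      push_cast at ih hid
      nlinarith [ih, hS, hC, hid]

/-- With `w_m = binom(n, m+1)·(m+1) / (∑_{k=0}^m binom(n,k))`, the sequence `w_m`
is nonincreasing: `w_{m+1} ≤ w_m` whenever `m + 1 < n`. -/
theorem stmt2 (n m : ℕ) (h : m + 1 < n)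
    (w : ℕ → ℚ)
    (hw : ∀ l, w l = ((n.choose (l + 1) : ℚ) * (l + 1)) /
      (∑ k ∈ Finset.range (l + 1), (n.choose k : ℚ))) :
    w (m + 1) ≤ w m := by
  have pos : ∀ l : ℕ, (0 : ℚ) < ∑ k ∈ Finset.range (l + 1), (n.choose k : ℚ) := by
    intro l
    have h1 : (n.choose 0 : ℚ) ≤ ∑ k ∈ Finset.range (l + 1), (n.choose k : ℚ) :=
      Finset.single_le_sum (f := fun k => (n.choose k : ℚ)) (fun i _ => by positivity) (Finset.mem_range.mpr (Nat.succ_pos l))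
    simpa using lt_of_lt_of_le (by norm_num : (0:ℚ) < (n.choose 0 : ℚ)) h1
  rw [hw, hw, div_le_div_iff₀ (pos _) (pos _)]
  set S : ℚ := ∑ k ∈ Finset.range (m + 1), (n.choose k : ℚ) with hSdef
  have hsum : ∑ k ∈ Finset.range (m + 1 + 1), (n.choose k : ℚ) = S + n.choose (m + 1) :=
    Finset.sum_range_succ _ _
  rw [hsum]
  have hS : (0 : ℚ) ≤ S := le_of_lt (pos m)
  have hC : (0 : ℚ) ≤ (n.choose (m + 1) : ℚ) := by positivity
  have hid := choose_id_q n m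
  have hkey := key_ineq n m
  rw [← hSdef] at hkey
  have hmul := mul_le_mul_of_nonneg_right hkey hC
  push_cast
  push_cast at hid hmul
  nlinarith [hmul, hid, hS, hC]
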